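/- Unified in-expectation bound for NSGD with a general gradient estimator: let (g_t)_{t≥1} be any sequence of random vectors in ℝ^d with g_t ≠ 0 almost surely and E[‖g_t − ∇F(x_t)‖] < ∞, and run NSGD x_{t+1} = x_t − η_t·g_t/‖g_t‖ with deterministic step-sizes η_t > 0 for T iterations. Then ∑_{t=1}^T (η_t/∑_{τ=1}^T η_τ)·E[‖∇F(x_t)‖] ≤ ( Δ₁ + (L/2)·∑_{t=1}^T η_t² + 2·∑_{t=1}^T η_t·E[‖g_t − ∇F(x_t)‖] ) / ∑_{τ=1}^T η_τ. -/

import Mathlib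

open MeasureTheory ProbabilityTheory Real InnerProductSpace

local notation "⟪" x ", " y "⟫" => @inner ℝ _ _ x y

lemma descent_lemma {E : Type*} [NormedAddCommGroup E] [InnerProductSpace ℝ E] [CompleteSpace E]
    (F : E → ℝ) (gradF : E → E) (L : ℝ) (hL : 0 ≤ L)
    (hgrad : ∀ x, HasGradientAt F (gradF x) x)
    (hsmooth : ∀ x y, ‖gradF x - gradF y‖ ≤ L * ‖x - y‖) (x y : E) :
    F y ≤ F x + ⟪gradF x, y - x⟫ + L / 2 * ‖y - x‖ ^ 2 := by
  set v := y - x with hv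
  have hline : ∀ s : ℝ, HasDerivAt (fun s : ℝ => F (x + s • v)) ⟪gradF (x + s • v), v⟫ s := by
    intro s
    have h1 : HasDerivAt (fun s : ℝ => x + s • v) v s := by
      simpa using ((hasDerivAt_id s).smul_const v).const_add x
    have h2 := ((hgrad (x + s • v)).hasFDerivAt.comp_hasDerivAt s h1)
    exact h2
  have hG : ∀ x, HasFDerivAt F (toDual ℝ E (gradF x)) x := fun x => (hgrad x).hasFDerivAt
  set h : ℝ → ℝ := fun s => F (x + s • v) - s * ⟪gradF x, v⟫ - L / 2 * s ^ 2 * ‖v‖ ^ 2 with hh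
  have hderiv : ∀ s : ℝ, HasDerivAt h
      (⟪gradF (x + s • v), v⟫ - ⟪gradF x, v⟫ - L * s * ‖v‖ ^ 2) s := by
    intro s
    have h2 : HasDerivAt (fun s : ℝ => s * ⟪gradF x, v⟫) ⟪gradF x, v⟫ s := by
      simpa using (hasDerivAt_id s).mul_const ⟪gradF x, v⟫
    have h3 : HasDerivAt (fun s : ℝ => L / 2 * s ^ 2 * ‖v‖ ^ 2) (L * s * ‖v‖ ^ 2) s := by
      have := ((hasDerivAt_pow 2 s).const_mul (L / 2)).mul_const (‖v‖ ^ 2)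
      exact this.congr_deriv (by rw [show (2:ℕ) - 1 = 1 from rfl]; push_cast; ring)
    exact ((hline s).sub h2).sub h3
  have hanti : AntitoneOn h (Set.Icc (0:ℝ) 1) := by
    apply antitoneOn_of_deriv_nonpos (convex_Icc 0 1)
    · exact fun s _ => ((hderiv s).continuousAt).continuousWithinAt
    · exact fun s _ => ((hderiv s).differentiableAt).differentiableWithinAt
    · intro s hs
      rw [interior_Icc] at hs
      rw [(hderiv s).deriv]
      have h1 : ⟪gradF (x + s • v), v⟫ - ⟪gradF x, v⟫ = ⟪gradF (x + s • v) - gradF x, v⟫ := by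
        rw [inner_sub_left]
      rw [h1]
      have h2 : ⟪gradF (x + s • v) - gradF x, v⟫ ≤ ‖gradF (x + s • v) - gradF x‖ * ‖v‖ :=
        real_inner_le_norm _ _
      have h3 : ‖gradF (x + s • v) - gradF x‖ ≤ L * ‖s • v‖ := by
        simpa using hsmooth (x + s • v) x
      have h4 : ‖s • v‖ = s * ‖v‖ := by
        rw [norm_smul, Real.norm_eq_abs, abs_of_pos hs.1]
      rw [h4] at h3
      have h5 : ‖gradF (x + s • v) - gradF x‖ * ‖v‖ ≤ L * (s * ‖v‖) * ‖v‖ :=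
        mul_le_mul_of_nonneg_right h3 (norm_nonneg v)
      nlinarith [h2, h5]
  have h10 := hanti (Set.left_mem_Icc.2 zero_le_one) (Set.right_mem_Icc.2 zero_le_one) zero_le_one
  simp only [hh] at h10
  have e0 : x + (0:ℝ) • v = x := by simp
  have e1 : x + (1:ℝ) • v = y := by simp [hv]
  rw [e0, e1] at h10
  nlinarith [h10]

lemma step_ineq {E : Type*} [NormedAddCommGroup E] [InnerProductSpace ℝ E] [CompleteSpace E]
    (F : E → ℝ) (gradF : E → E) (L : ℝ) (hL : 0 ≤ L)
    (hgrad : ∀ x, HasGradientAt F (gradF x) x)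
    (hsmooth : ∀ x y, ‖gradF x - gradF y‖ ≤ L * ‖x - y‖)
    (p gvec : E) (s : ℝ) (hs : 0 < s) (hg : gvec ≠ 0) :
    F (p - s • (‖gvec‖⁻¹ • gvec)) ≤
      F p - s * ‖gradF p‖ + 2 * s * ‖gvec - gradF p‖ + L / 2 * s ^ 2 := by
  have hn : 0 < ‖gvec‖ := norm_pos_iff.2 hg
  set y := p - s • (‖gvec‖⁻¹ • gvec) with hy
  have hyp : y - p = -(s • (‖gvec‖⁻¹ • gvec)) := by rw [hy]; abel
  have hnorm : ‖y - p‖ = s := by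
    rw [hyp, norm_neg, norm_smul, norm_smul, norm_inv, norm_norm,
      inv_mul_cancel₀ hn.ne', mul_one, Real.norm_eq_abs, abs_of_pos hs]
  have hinner : ⟪gradF p, y - p⟫ = -(s * (‖gvec‖⁻¹ * ⟪gradF p, gvec⟫)) := by
    rw [hyp, inner_neg_right, real_inner_smul_right, real_inner_smul_right]
  -- key lower bound on the normalized inner product
  have hkey : ‖gradF p‖ - 2 * ‖gvec - gradF p‖ ≤ ‖gvec‖⁻¹ * ⟪gradF p, gvec⟫ := by
    have e1 : ⟪gradF p, gvec⟫ = ⟪gvec, gvec⟫ - ⟪gvec - gradF p, gvec⟫ := by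
      rw [inner_sub_left]; ring
    have e2 : ⟪gvec, gvec⟫ = ‖gvec‖ ^ 2 := real_inner_self_eq_norm_sq gvec
    have e3 : ⟪gvec - gradF p, gvec⟫ ≤ ‖gvec - gradF p‖ * ‖gvec‖ := real_inner_le_norm _ _
    have e4 : ‖gradF p‖ - ‖gvec - gradF p‖ ≤ ‖gvec‖ := by
      have := norm_sub_norm_le (gradF p) gvec
      have h5 : ‖gradF p - gvec‖ = ‖gvec - gradF p‖ := norm_sub_rev _ _
      linarith
    have e5 : (‖gvec‖ - ‖gvec - gradF p‖) ≤ ‖gvec‖⁻¹ * ⟪gradF p, gvec⟫ := by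
      have h6 : ‖gvec‖ ^ 2 - ‖gvec - gradF p‖ * ‖gvec‖ ≤ ⟪gradF p, gvec⟫ := by
        rw [e1, e2]; linarith
      have h7 := mul_le_mul_of_nonneg_left h6 (inv_nonneg.2 hn.le)
      calc ‖gvec‖ - ‖gvec - gradF p‖
          = ‖gvec‖⁻¹ * (‖gvec‖ ^ 2 - ‖gvec - gradF p‖ * ‖gvec‖) := by
            field_simp
        _ ≤ ‖gvec‖⁻¹ * ⟪gradF p, gvec⟫ := h7
    linarith
  have hd := descent_lemma F gradF L hL hgrad hsmooth p y
  rw [hinner, hnorm] at hd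
  have h8 : s * (‖gradF p‖ - 2 * ‖gvec - gradF p‖) ≤ s * (‖gvec‖⁻¹ * ⟪gradF p, gvec⟫) :=
    mul_le_mul_of_nonneg_left hkey hs.le
  nlinarith [hd, h8]


/-- unified in-expectation bound for NSGD with a general gradient estimator
sequence `(g_t)`: the step-size-weighted average of the expected gradient norms is bounded by
`(Δ₁ + (L/2)·∑ηₜ² + 2·∑ηₜ·E[‖gₜ − ∇F(xₜ)‖]) / ∑ητ`. -/
theorem nsgd_unified_in_expectation
    {d : ℕ} {Ω : Type*} [MeasurableSpace Ω] (μ : Measure Ω) [IsProbabilityMeasure μ]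
    (F : EuclideanSpace ℝ (Fin d) → ℝ)
    (gradF : EuclideanSpace ℝ (Fin d) → EuclideanSpace ℝ (Fin d))
    (L Fstar Δ₁ : ℝ) (hL : 0 ≤ L)
    -- F is differentiable with gradient `gradF` and is L-smooth
    (hgrad : ∀ x, HasGradientAt F (gradF x) x)
    (hsmooth : ∀ x y, ‖gradF x - gradF y‖ ≤ L * ‖x - y‖)
    -- F is bounded below by Fstar
    (hlb : ∀ x, Fstar ≤ F x)
    -- horizon and deterministic positive step-sizes
    (T : ℕ) (hT : 1 ≤ T)
    (η : ℕ → ℝ) (hη : ∀ t, 0 < η t)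
    -- the gradient estimators: almost surely nonzero, with integrable deviation
    (g : ℕ → Ω → EuclideanSpace ℝ (Fin d))
    (hgmeas : ∀ t, Measurable (g t))
    (x : ℕ → Ω → EuclideanSpace ℝ (Fin d))
    (x₁ : EuclideanSpace ℝ (Fin d)) (hx1 : ∀ ω, x 1 ω = x₁)
    (hΔ : F x₁ - Fstar ≤ Δ₁)
    (hgne : ∀ t, ∀ᵐ ω ∂μ, g t ω ≠ 0)
    (hint : ∀ t, Integrable (fun ω => ‖g t ω - gradF (x t ω)‖) μ)
    -- the NSGD iterates
    (hrec : ∀ t ω, 1 ≤ t → x (t + 1) ω = x t ω - η t • (‖g t ω‖⁻¹ • g t ω)) :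
    ∑ t ∈ Finset.Icc 1 T,
        (η t / ∑ τ ∈ Finset.Icc 1 T, η τ) * ∫ ω, ‖gradF (x t ω)‖ ∂μ ≤
      (Δ₁ + (L / 2) * ∑ t ∈ Finset.Icc 1 T, (η t) ^ 2
          + 2 * ∑ t ∈ Finset.Icc 1 T, η t * ∫ ω, ‖g t ω - gradF (x t ω)‖ ∂μ) /
        (∑ τ ∈ Finset.Icc 1 T, η τ) := by
  have hS : 0 < ∑ τ ∈ Finset.Icc 1 T, η τ :=
    Finset.sum_pos (fun i _ => hη i) (Finset.nonempty_Icc.2 hT)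
  -- continuity of gradF
  have hcont : Continuous gradF := by
    refine (LipschitzWith.of_dist_le_mul (K := Real.toNNReal L) fun a b => ?_).continuous
    simpa [dist_eq_norm, Real.coe_toNNReal L hL] using hsmooth a b
  -- measurability of iterates
  have hxmeas : ∀ t, 1 ≤ t → Measurable (x t) := by
    intro t ht
    induction t, ht using Nat.le_induction with
    | base =>
        have : x 1 = fun _ => x₁ := funext hx1
        rw [this]; exact measurable_const
    | succ t ht ih =>
        have hxe : x (t + 1) = fun ω => x t ω - η t • (‖g t ω‖⁻¹ • g t ω) :=
          funext fun ω => hrec t ω ht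
        rw [hxe]
        exact ih.sub (((hgmeas t).norm.inv.smul (hgmeas t)).const_smul (η t))
  -- boundedness of iterates
  have hstep : ∀ t (ω : Ω), ‖η t • (‖g t ω‖⁻¹ • g t ω)‖ ≤ η t := by
    intro t ω
    rw [norm_smul, norm_smul, norm_inv, norm_norm, Real.norm_eq_abs, abs_of_pos (hη t)]
    have hle1 : ‖g t ω‖⁻¹ * ‖g t ω‖ ≤ 1 := by
      rcases eq_or_ne (g t ω) 0 with h | h
      · simp [h]
      · rw [inv_mul_cancel₀ (norm_pos_iff.2 h).ne']
    calc η t * (‖g t ω‖⁻¹ * ‖g t ω‖) ≤ η t * 1 :=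
          mul_le_mul_of_nonneg_left hle1 (hη t).le
      _ = η t := mul_one _
  have hbound : ∀ t, 1 ≤ t → ∀ ω, ‖x t ω - x₁‖ ≤ ∑ s ∈ Finset.Ico 1 t, η s := by
    intro t ht
    induction t, ht using Nat.le_induction with
    | base => intro ω; simp [hx1 ω]
    | succ t ht ih =>
        intro ω
        rw [Finset.sum_Ico_succ_top ht, hrec t ω ht]
        have h1 : x t ω - η t • (‖g t ω‖⁻¹ • g t ω) - x₁
            = (x t ω - x₁) + (-(η t • (‖g t ω‖⁻¹ • g t ω))) := by abel
        rw [h1]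
        calc ‖(x t ω - x₁) + (-(η t • (‖g t ω‖⁻¹ • g t ω)))‖
            ≤ ‖x t ω - x₁‖ + ‖-(η t • (‖g t ω‖⁻¹ • g t ω))‖ := norm_add_le _ _
          _ ≤ (∑ s ∈ Finset.Ico 1 t, η s) + η t := by
              rw [norm_neg]; exact add_le_add (ih ω) (hstep t ω)
  -- integrability of gradient norms
  set C : ℝ := ‖gradF x₁‖ + L * ∑ s ∈ Finset.Icc 1 T, η s with hC
  have hgbound : ∀ t ∈ Finset.Icc 1 T, ∀ ω, ‖gradF (x t ω)‖ ≤ C := by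
    intro t ht ω
    rw [Finset.mem_Icc] at ht
    have h1 : ‖gradF (x t ω)‖ - ‖gradF x₁‖ ≤ ‖gradF (x t ω) - gradF x₁‖ :=
      norm_sub_norm_le _ _
    have h2 : ‖gradF (x t ω) - gradF x₁‖ ≤ L * ‖x t ω - x₁‖ := hsmooth _ _
    have h3 : ‖x t ω - x₁‖ ≤ ∑ s ∈ Finset.Ico 1 t, η s := hbound t ht.1 ω
    have h4 : ∑ s ∈ Finset.Ico 1 t, η s ≤ ∑ s ∈ Finset.Icc 1 T, η s := by
      apply Finset.sum_le_sum_of_subset_of_nonneg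
      · intro a ha
        rw [Finset.mem_Ico] at ha
        rw [Finset.mem_Icc]
        omega
      · exact fun i _ _ => (hη i).le
    have h5 : L * ‖x t ω - x₁‖ ≤ L * ∑ s ∈ Finset.Icc 1 T, η s :=
      mul_le_mul_of_nonneg_left (h3.trans h4) hL
    rw [hC]; linarith
  have hI : ∀ t ∈ Finset.Icc 1 T, Integrable (fun ω => ‖gradF (x t ω)‖) μ := by
    intro t ht
    rw [Finset.mem_Icc] at ht
    refine (integrable_const C).mono'
      ((hcont.measurable.comp (hxmeas t ht.1)).norm.aestronglyMeasurable)
      (ae_of_all _ fun ω => ?_)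
    rw [norm_norm]
    exact hgbound t (Finset.mem_Icc.2 ht) ω
  -- a.e. pointwise telescoping bound
  have hae : ∀ᵐ ω ∂μ, ∀ t, g t ω ≠ 0 := ae_all_iff.2 hgne
  have hkey : ∀ ω, (∀ t, g t ω ≠ 0) → ∀ N : ℕ,
      ∑ t ∈ Finset.Icc 1 N, η t * ‖gradF (x t ω)‖ ≤
        F x₁ - F (x (N + 1) ω) + L / 2 * ∑ t ∈ Finset.Icc 1 N, (η t) ^ 2
          + 2 * ∑ t ∈ Finset.Icc 1 N, η t * ‖g t ω - gradF (x t ω)‖ := by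
    intro ω hgo N
    induction N with
    | zero => simp [hx1 ω]
    | succ N ih =>
        have hN1 : 1 ≤ N + 1 := Nat.succ_le_succ (Nat.zero_le N)
        rw [Finset.sum_Icc_succ_top hN1, Finset.sum_Icc_succ_top hN1,
          Finset.sum_Icc_succ_top hN1]
        have hst : F (x (N + 1 + 1) ω) ≤ F (x (N + 1) ω) - η (N + 1) * ‖gradF (x (N + 1) ω)‖
            + 2 * η (N + 1) * ‖g (N + 1) ω - gradF (x (N + 1) ω)‖ + L / 2 * (η (N + 1)) ^ 2 := by
          rw [hrec (N + 1) ω hN1]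
          exact step_ineq F gradF L hL hgrad hsmooth _ _ _ (hη (N + 1)) (hgo (N + 1))
        linarith
  -- integrate
  set I : ℕ → ℝ := fun t => ∫ ω, ‖gradF (x t ω)‖ ∂μ with hIdef
  set J : ℕ → ℝ := fun t => ∫ ω, ‖g t ω - gradF (x t ω)‖ ∂μ with hJdef
  have hmain : ∑ t ∈ Finset.Icc 1 T, η t * I t ≤
      Δ₁ + L / 2 * ∑ t ∈ Finset.Icc 1 T, (η t) ^ 2 + 2 * ∑ t ∈ Finset.Icc 1 T, η t * J t := by
    have hLint : Integrable (fun ω => ∑ t ∈ Finset.Icc 1 T, η t * ‖gradF (x t ω)‖) μ :=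
      integrable_finset_sum _ fun t ht => ((hI t ht).const_mul (η t))
    have hRint : Integrable (fun ω => Δ₁ + L / 2 * ∑ t ∈ Finset.Icc 1 T, (η t) ^ 2
        + 2 * ∑ t ∈ Finset.Icc 1 T, η t * ‖g t ω - gradF (x t ω)‖) μ := by
      refine ((integrable_const _).add ?_)
      exact (integrable_finset_sum _ fun t _ => (hint t).const_mul (η t)).const_mul 2
    have hle : ∫ ω, ∑ t ∈ Finset.Icc 1 T, η t * ‖gradF (x t ω)‖ ∂μ ≤
        ∫ ω, (Δ₁ + L / 2 * ∑ t ∈ Finset.Icc 1 T, (η t) ^ 2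
          + 2 * ∑ t ∈ Finset.Icc 1 T, η t * ‖g t ω - gradF (x t ω)‖) ∂μ := by
      refine integral_mono_ae hLint hRint (hae.mono fun ω hgo => ?_)
      have h := hkey ω hgo T
      have h2 : F x₁ - F (x (T + 1) ω) ≤ Δ₁ := by
        have := hlb (x (T + 1) ω); linarith
      linarith
    have hL1 : ∫ ω, ∑ t ∈ Finset.Icc 1 T, η t * ‖gradF (x t ω)‖ ∂μ
        = ∑ t ∈ Finset.Icc 1 T, η t * I t := by
      rw [integral_finset_sum _ fun t ht => ((hI t ht).const_mul (η t))]
      exact Finset.sum_congr rfl fun t _ => integral_const_mul _ _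
    have hR1 : ∫ ω, (Δ₁ + L / 2 * ∑ t ∈ Finset.Icc 1 T, (η t) ^ 2
          + 2 * ∑ t ∈ Finset.Icc 1 T, η t * ‖g t ω - gradF (x t ω)‖) ∂μ
        = Δ₁ + L / 2 * ∑ t ∈ Finset.Icc 1 T, (η t) ^ 2 + 2 * ∑ t ∈ Finset.Icc 1 T, η t * J t := by
      rw [integral_add (integrable_const _)
        ((integrable_finset_sum _ fun t _ => (hint t).const_mul (η t)).const_mul 2),
        integral_const]
      simp only [measure_univ, probReal_univ, smul_eq_mul, one_mul]
      rw [integral_const_mul, integral_finset_sum _ fun t _ => (hint t).const_mul (η t)]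
      congr 2
      exact Finset.sum_congr rfl fun t _ => integral_const_mul _ _
    rw [hL1, hR1] at hle
    exact hle
  calc ∑ t ∈ Finset.Icc 1 T, (η t / ∑ τ ∈ Finset.Icc 1 T, η τ) * I t
      = (∑ t ∈ Finset.Icc 1 T, η t * I t) / (∑ τ ∈ Finset.Icc 1 T, η τ) := by
        rw [Finset.sum_div]
        exact Finset.sum_congr rfl fun t _ => by rw [div_mul_eq_mul_div]
    _ ≤ _ := by
        exact div_le_div_of_nonneg_right hmain hS.le
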